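/- Let E ∈ ℝ² with E ≠ 0, let R, X ∈ ℝ with R ≠ 0 and X ≠ 0, let Imax > 0, let M₁ ≠ M₂ be two distinct matrices from {M_P, M_Q, M_V}, and let s₁, s₂ ∈ ℝ be such that the slice 𝒲(s₁,s₂) := { W ∈ 𝒲 : Tr(M₁ W) = s₁ and Tr(M₂ W) = s₂ } is nonempty. Then every minimizer of the trace functional W ↦ Tr(W) over 𝒲(s₁,s₂) has rank at most 1. -/

import Mathlib

/-- The matrix `J` with rows `(0,1)` and `(-1,0)`. -/
def Jmat : Matrix (Fin 2) (Fin 2) ℝ := !![0, 1; -1, 0]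

/-- The impedance matrix `Z` with rows `(R,-X)` and `(X,R)`. -/
def Zmat (R X : ℝ) : Matrix (Fin 2) (Fin 2) ℝ := !![R, -X; X, R]

/-- Interpret a plain vector `Fin 2 → ℝ` as an element of Euclidean space `ℝ²`. -/
noncomputable def toE (v : Fin 2 → ℝ) : EuclideanSpace ℝ (Fin 2) := WithLp.toLp 2 v

/-- The vector `J E ∈ ℝ²`. -/
noncomputable def Jv (E : EuclideanSpace ℝ (Fin 2)) : EuclideanSpace ℝ (Fin 2) :=
  toE (Jmat.mulVec (fun i => E i))

/-- The vector `Zᵀ E ∈ ℝ²`. -/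
noncomputable def ZtE (R X : ℝ) (E : EuclideanSpace ℝ (Fin 2)) : EuclideanSpace ℝ (Fin 2) :=
  toE ((Zmat R X).transpose.mulVec (fun i => E i))

/-- `M(α, a, ζ)`: the 3×3 symmetric matrix with top-left 2×2 block `α·I₂`,
top-right column `a/2`, bottom-left row `aᵀ/2`, and bottom-right entry `ζ`. -/
noncomputable def Mmat (α : ℝ) (a : EuclideanSpace ℝ (Fin 2)) (ζ : ℝ) :
    Matrix (Fin 3) (Fin 3) ℝ :=
  !![α, 0, a 0 / 2; 0, α, a 1 / 2; a 0 / 2, a 1 / 2, ζ]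

/-- `M_P := M(3R/2, (3/2)E, 0)`. -/
noncomputable def MP (E : EuclideanSpace ℝ (Fin 2)) (R : ℝ) : Matrix (Fin 3) (Fin 3) ℝ :=
  Mmat (3 * R / 2) ((3 / 2 : ℝ) • E) 0

/-- `M_Q := M(3X/2, (3/2)JE, 0)`. -/
noncomputable def MQ (E : EuclideanSpace ℝ (Fin 2)) (X : ℝ) : Matrix (Fin 3) (Fin 3) ℝ :=
  Mmat (3 * X / 2) ((3 / 2 : ℝ) • Jv E) 0

/-- `M_V := M(R² + X², 2ZᵀE, ‖E‖²)`. -/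
noncomputable def MV (E : EuclideanSpace ℝ (Fin 2)) (R X : ℝ) : Matrix (Fin 3) (Fin 3) ℝ :=
  Mmat (R ^ 2 + X ^ 2) ((2 : ℝ) • ZtE R X E) (‖E‖ ^ 2)

/-- The SDP feasible set `𝒲`. -/
def Wset (Imax : ℝ) : Set (Matrix (Fin 3) (Fin 3) ℝ) :=
  {W | W.PosSemidef ∧ W 0 0 + W 1 1 ≤ Imax ^ 2 ∧ W 2 2 = 1}

noncomputable def rank1W (p q κ : ℝ) : Matrix (Fin 3) (Fin 3) ℝ :=
  !![p^2+κ, p*q, p; p*q, q^2+κ, q; p, q, 1]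

lemma trace_Mmat (α ζ : ℝ) (a : EuclideanSpace ℝ (Fin 2)) (W : Matrix (Fin 3) (Fin 3) ℝ) :
    (Mmat α a ζ * W).trace = α * (W 0 0 + W 1 1) + (a 0/2) * (W 0 2 + W 2 0)
      + (a 1/2) * (W 1 2 + W 2 1) + ζ * W 2 2 := by
  simp [Matrix.trace, Matrix.mul_apply, Fin.sum_univ_three, Mmat, Matrix.vecMul,
    dotProduct, Matrix.vecHead, Matrix.vecTail]
  ring

lemma psd_rank1W (p q κ : ℝ) (hκ : 0 ≤ κ) : (rank1W p q κ).PosSemidef := by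
  apply Matrix.PosSemidef.of_dotProduct_mulVec_nonneg
  · show Matrix.conjTranspose _ = _
    ext i j
    fin_cases i <;> fin_cases j <;> simp [rank1W, Matrix.conjTranspose_apply]
  · intro x
    simp [rank1W, dotProduct, Matrix.mulVec, Fin.sum_univ_three]
    nlinarith [sq_nonneg (p * x 0 + q * x 1 + x 2), mul_nonneg hκ (sq_nonneg (x 0)),
      mul_nonneg hκ (sq_nonneg (x 1))]

lemma trace_Mmat_rank1W (α ζ p q κ : ℝ) (a : EuclideanSpace ℝ (Fin 2)) :
    (Mmat α a ζ * rank1W p q κ).trace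
      = α * (p^2 + q^2 + 2*κ) + a 0 * p + a 1 * q + ζ := by
  rw [trace_Mmat]
  simp [rank1W]
  ring

lemma trace_rank1W (p q κ : ℝ) : (rank1W p q κ).trace = p^2 + q^2 + 2*κ + 1 := by
  simp [rank1W, Matrix.trace, Fin.sum_univ_three]
  ring

set_option maxHeartbeats 2000000 in
lemma key (Imax α₁ α₂ ζ₁ ζ₂ s₁ s₂ : ℝ) (a₁ a₂ : EuclideanSpace ℝ (Fin 2))
    (hd : a₁ 0 * a₂ 1 - a₁ 1 * a₂ 0 ≠ 0)
    (W : Matrix (Fin 3) (Fin 3) ℝ) (hW : W ∈ Wset Imax)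
    (h₁ : (Mmat α₁ a₁ ζ₁ * W).trace = s₁) (h₂ : (Mmat α₂ a₂ ζ₂ * W).trace = s₂)
    (hmin : ∀ W' ∈ Wset Imax, (Mmat α₁ a₁ ζ₁ * W').trace = s₁ →
      (Mmat α₂ a₂ ζ₂ * W').trace = s₂ → W.trace ≤ W'.trace) :
    W.rank ≤ 1 := by
  obtain ⟨hpsd, hbound, h22⟩ := hW
  have hq : ∀ x : Fin 3 → ℝ, 0 ≤ dotProduct x (W.mulVec x) := by
    intro x
    simpa using hpsd.dotProduct_mulVec_nonneg x
  have hs20 : W 2 0 = W 0 2 := by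
    have := congrFun (congrFun hpsd.1 0) 2
    simpa [Matrix.conjTranspose_apply] using this
  have hs21 : W 2 1 = W 1 2 := by
    have := congrFun (congrFun hpsd.1 1) 2
    simpa [Matrix.conjTranspose_apply] using this
  have hs10 : W 1 0 = W 0 1 := by
    have := congrFun (congrFun hpsd.1 0) 1
    simpa [Matrix.conjTranspose_apply] using this
  have hc1 : α₁ * (W 0 0 + W 1 1) + a₁ 0 * W 0 2 + a₁ 1 * W 1 2 + ζ₁ = s₁ := by
    rw [trace_Mmat, hs20, hs21, h22] at h₁; linear_combination h₁
  have hc2 : α₂ * (W 0 0 + W 1 1) + a₂ 0 * W 0 2 + a₂ 1 * W 1 2 + ζ₂ = s₂ := by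
    rw [trace_Mmat, hs20, hs21, h22] at h₂; linear_combination h₂
  -- Step A : the trace of the top-left block is at most ‖w‖²
  have hA : W 0 0 + W 1 1 ≤ W 0 2 ^ 2 + W 1 2 ^ 2 := by
    by_contra hlt
    push_neg at hlt
    obtain ⟨d, hd_def⟩ : ∃ x : ℝ, x = a₁ 0 * a₂ 1 - a₁ 1 * a₂ 0 := ⟨_, rfl⟩
    obtain ⟨u0, hu0_def⟩ : ∃ x : ℝ, x = (α₁ * a₂ 1 - α₂ * a₁ 1) / d := ⟨_, rfl⟩
    obtain ⟨u1, hu1_def⟩ : ∃ x : ℝ, x = (a₁ 0 * α₂ - a₂ 0 * α₁) / d := ⟨_, rfl⟩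
    have hdne : d ≠ 0 := by rw [hd_def]; exact hd
    have hu1 : a₁ 0 * u0 + a₁ 1 * u1 = α₁ := by
      rw [hu0_def, hu1_def, hd_def]; field_simp; ring
    have hu2 : a₂ 0 * u0 + a₂ 1 * u1 = α₂ := by
      rw [hu0_def, hu1_def]; field_simp; rw [hd_def]; ring
    obtain ⟨K, hK_def⟩ : ∃ x : ℝ, x = 2 + 2 * |W 0 2 * u0 + W 1 2 * u1| + (u0 ^ 2 + u1 ^ 2) := ⟨_, rfl⟩
    have hK : 0 < K := by rw [hK_def]; positivity
    obtain ⟨δ, hδ_def⟩ : ∃ x : ℝ, x = (W 0 0 + W 1 1) - (W 0 2 ^ 2 + W 1 2 ^ 2) := ⟨_, rfl⟩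
    have hδ : 0 < δ := by rw [hδ_def]; linarith
    obtain ⟨ε, hε_def⟩ : ∃ x : ℝ, x = min (δ / K) 1 := ⟨_, rfl⟩
    have hε : 0 < ε := by rw [hε_def]; exact lt_min (div_pos hδ hK) one_pos
    have hε1 : ε ≤ 1 := by rw [hε_def]; exact min_le_right _ _
    have hεK : ε * K ≤ δ := by
      have h1 : ε ≤ δ / K := by rw [hε_def]; exact min_le_left _ _
      calc ε * K ≤ (δ / K) * K := by nlinarith
        _ = δ := by field_simp
    have habs1 : W 0 2 * u0 + W 1 2 * u1 ≤ |W 0 2 * u0 + W 1 2 * u1| := le_abs_self _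
    have hεsq : ε * (ε * (u0 ^ 2 + u1 ^ 2)) ≤ 1 * (ε * (u0 ^ 2 + u1 ^ 2)) :=
      mul_le_mul_of_nonneg_right hε1 (by positivity)
    have hεabs : ε * (W 0 2 * u0 + W 1 2 * u1) ≤ ε * |W 0 2 * u0 + W 1 2 * u1| :=
      mul_le_mul_of_nonneg_left habs1 hε.le
    obtain ⟨p, hp_def⟩ : ∃ x : ℝ, x = W 0 2 + ε * u0 := ⟨_, rfl⟩
    obtain ⟨q, hq_def⟩ : ∃ x : ℝ, x = W 1 2 + ε * u1 := ⟨_, rfl⟩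
    obtain ⟨κ, hκ_def⟩ : ∃ x : ℝ, x = ((W 0 0 + W 1 1 - ε) - (p ^ 2 + q ^ 2)) / 2 := ⟨_, rfl⟩
    have hκ : 0 ≤ κ := by
      have hεK' : ε * (2 + 2 * |W 0 2 * u0 + W 1 2 * u1| + (u0 ^ 2 + u1 ^ 2))
          ≤ (W 0 0 + W 1 1) - (W 0 2 ^ 2 + W 1 2 ^ 2) := by
        rw [← hK_def, ← hδ_def]; exact hεK
      have hgoal : ((W 0 0 + W 1 1 - ε) - ((W 0 2 + ε * u0) ^ 2 + (W 1 2 + ε * u1) ^ 2))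
          = ((W 0 0 + W 1 1) - (W 0 2 ^ 2 + W 1 2 ^ 2)) - ε
            - 2 * (ε * (W 0 2 * u0 + W 1 2 * u1)) - ε * (ε * (u0 ^ 2 + u1 ^ 2)) := by ring
      rw [hκ_def, hp_def, hq_def]
      linarith [hεK', hεsq, hεabs, hε, hgoal, abs_nonneg (W 0 2 * u0 + W 1 2 * u1)]
    have hsum : p ^ 2 + q ^ 2 + 2 * κ = W 0 0 + W 1 1 - ε := by rw [hκ_def]; ring
    have hmem : rank1W p q κ ∈ Wset Imax := by
      refine ⟨psd_rank1W p q κ hκ, ?_, ?_⟩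
      · have : (rank1W p q κ) 0 0 + (rank1W p q κ) 1 1 = p ^ 2 + q ^ 2 + 2 * κ := by
          simp [rank1W]; ring
        rw [this, hsum]; linarith
      · simp [rank1W]
    have htr1 : (Mmat α₁ a₁ ζ₁ * rank1W p q κ).trace = s₁ := by
      rw [trace_Mmat_rank1W, hsum, hp_def, hq_def]
      linear_combination hc1 + ε * hu1
    have htr2 : (Mmat α₂ a₂ ζ₂ * rank1W p q κ).trace = s₂ := by
      rw [trace_Mmat_rank1W, hsum, hp_def, hq_def]
      linear_combination hc2 + ε * hu2
    have hle := hmin _ hmem htr1 htr2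
    have htrW : W.trace = W 0 0 + W 1 1 + W 2 2 := by
      simp [Matrix.trace, Fin.sum_univ_three]
    rw [htrW, h22, trace_rank1W, hsum] at hle
    linarith
  -- Step B : equalities forcing rank one
  have h00 : W 0 2 ^ 2 ≤ W 0 0 := by
    have := hq ![1, 0, -(W 0 2)]
    simp [dotProduct, Matrix.mulVec, Fin.sum_univ_three] at this
    rw [hs20, h22] at this
    nlinarith [this]
  have h11 : W 1 2 ^ 2 ≤ W 1 1 := by
    have := hq ![0, 1, -(W 1 2)]
    simp [dotProduct, Matrix.mulVec, Fin.sum_univ_three] at this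
    rw [hs21, h22] at this
    nlinarith [this]
  have hE00 : W 0 0 = W 0 2 ^ 2 := by linarith
  have hE11 : W 1 1 = W 1 2 ^ 2 := by linarith
  have h01a : 0 ≤ W 0 1 - W 0 2 * W 1 2 := by
    have := hq ![1, 1, -(W 0 2 + W 1 2)]
    simp [dotProduct, Matrix.mulVec, Fin.sum_univ_three] at this
    rw [hs10, hs20, hs21, h22, hE00, hE11] at this
    nlinarith [this]
  have h01b : 0 ≤ W 0 2 * W 1 2 - W 0 1 := by
    have := hq ![1, -1, -(W 0 2 - W 1 2)]
    simp [dotProduct, Matrix.mulVec, Fin.sum_univ_three] at this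
    rw [hs10, hs20, hs21, h22, hE00, hE11] at this
    nlinarith [this]
  have hE01 : W 0 1 = W 0 2 * W 1 2 := by linarith
  have hfact : W = Matrix.replicateCol Unit ![W 0 2, W 1 2, 1] * Matrix.replicateRow Unit ![W 0 2, W 1 2, 1] := by
    ext i j
    rw [Matrix.mul_apply]
    fin_cases i <;> fin_cases j <;>
      simp [Matrix.replicateCol_apply, Matrix.replicateRow_apply] <;>
      first
        | rfl
        | (rw [hE00]; ring)
        | (rw [hE11]; ring)
        | (rw [hE01]; ring)
        | (rw [hs10, hE01]; ring)
        | exact hs20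
        | exact hs21
        | exact h22
        | nlinarith [hE00, hE11, hE01, hs10, hs20, hs21, h22]
  calc W.rank
      = (Matrix.replicateCol Unit ![W 0 2, W 1 2, 1] * Matrix.replicateRow Unit ![W 0 2, W 1 2, 1]).rank := by
        rw [← hfact]
    _ ≤ (Matrix.replicateCol Unit ![W 0 2, W 1 2, 1]).rank := Matrix.rank_mul_le_left _ _
    _ ≤ Fintype.card Unit := Matrix.rank_le_card_width _
    _ = 1 := by simp

/-- every minimizer of the trace over the nonempty slice
`𝒲(s₁,s₂) = {W ∈ 𝒲 : Tr(M₁W) = s₁, Tr(M₂W) = s₂}` has rank at most 1. -/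
theorem stmt14 (E : EuclideanSpace ℝ (Fin 2)) (hE : E ≠ 0) (R X : ℝ)
    (hR : R ≠ 0) (hX : X ≠ 0) (Imax : ℝ) (hI : 0 < Imax)
    (M₁ M₂ : Matrix (Fin 3) (Fin 3) ℝ)
    (hM₁ : M₁ ∈ ({MP E R, MQ E X, MV E R X} : Set (Matrix (Fin 3) (Fin 3) ℝ)))
    (hM₂ : M₂ ∈ ({MP E R, MQ E X, MV E R X} : Set (Matrix (Fin 3) (Fin 3) ℝ)))
    (hMne : M₁ ≠ M₂)
    (s₁ s₂ : ℝ)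
    (hne : ∃ W ∈ Wset Imax, (M₁ * W).trace = s₁ ∧ (M₂ * W).trace = s₂)
    (Wstar : Matrix (Fin 3) (Fin 3) ℝ)
    (hWstar : Wstar ∈ Wset Imax ∧ (M₁ * Wstar).trace = s₁ ∧ (M₂ * Wstar).trace = s₂)
    (hmin : ∀ W ∈ Wset Imax, (M₁ * W).trace = s₁ → (M₂ * W).trace = s₂ →
      Wstar.trace ≤ W.trace) :
    Wstar.rank ≤ 1 := by
  have hsmul : ∀ (c : ℝ) (v : EuclideanSpace ℝ (Fin 2)) (i : Fin 2), (c • v) i = c * v i :=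
    fun _ _ _ => rfl
  have hJ0 : Jv E 0 = E 1 := by
    simp [Jv, toE, Jmat, Matrix.mulVec, dotProduct, Fin.sum_univ_two]
  have hJ1 : Jv E 1 = -E 0 := by
    simp [Jv, toE, Jmat, Matrix.mulVec, dotProduct, Fin.sum_univ_two]
  have hZ0 : ZtE R X E 0 = R * E 0 + X * E 1 := by
    simp [ZtE, toE, Zmat, Matrix.mulVec, dotProduct, Fin.sum_univ_two, Matrix.transpose]
  have hZ1 : ZtE R X E 1 = -X * E 0 + R * E 1 := by
    simp [ZtE, toE, Zmat, Matrix.mulVec, dotProduct, Fin.sum_univ_two, Matrix.transpose]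
  have hEpos : 0 < E 0 ^ 2 + E 1 ^ 2 := by
    have h : ¬(E 0 = 0 ∧ E 1 = 0) := by
      rintro ⟨h0, h1⟩
      apply hE
      ext i
      fin_cases i <;> simpa
    rcases not_and_or.mp h with h | h <;>
      nlinarith [sq_nonneg (E 0), sq_nonneg (E 1), pow_pos (abs_pos.mpr h) 2,
        sq_abs (E 0), sq_abs (E 1)]
  -- the six determinant facts
  have hdPQ : ((3/2:ℝ) • E) 0 * ((3/2:ℝ) • Jv E) 1
      - ((3/2:ℝ) • E) 1 * ((3/2:ℝ) • Jv E) 0 ≠ 0 := by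
    simp only [hsmul, hJ0, hJ1]
    intro hc
    have h0 : E 0 ^ 2 + E 1 ^ 2 = 0 := by linear_combination (-(4:ℝ)/9) * hc
    linarith
  have hdQP : ((3/2:ℝ) • Jv E) 0 * ((3/2:ℝ) • E) 1
      - ((3/2:ℝ) • Jv E) 1 * ((3/2:ℝ) • E) 0 ≠ 0 := by
    intro hc; exact hdPQ (by linarith)
  have hdPV : ((3/2:ℝ) • E) 0 * ((2:ℝ) • ZtE R X E) 1
      - ((3/2:ℝ) • E) 1 * ((2:ℝ) • ZtE R X E) 0 ≠ 0 := by
    simp only [hsmul, hZ0, hZ1]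
    intro hc
    have h0 : X * (E 0 ^ 2 + E 1 ^ 2) = 0 := by linear_combination (-(1:ℝ)/3) * hc
    rcases mul_eq_zero.mp h0 with h | h
    · exact hX h
    · linarith
  have hdVP : ((2:ℝ) • ZtE R X E) 0 * ((3/2:ℝ) • E) 1
      - ((2:ℝ) • ZtE R X E) 1 * ((3/2:ℝ) • E) 0 ≠ 0 := by
    intro hc; exact hdPV (by linarith)
  have hdQV : ((3/2:ℝ) • Jv E) 0 * ((2:ℝ) • ZtE R X E) 1
      - ((3/2:ℝ) • Jv E) 1 * ((2:ℝ) • ZtE R X E) 0 ≠ 0 := by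
    simp only [hsmul, hJ0, hJ1, hZ0, hZ1]
    intro hc
    have h0 : R * (E 0 ^ 2 + E 1 ^ 2) = 0 := by linear_combination ((1:ℝ)/3) * hc
    rcases mul_eq_zero.mp h0 with h | h
    · exact hR h
    · linarith
  have hdVQ : ((2:ℝ) • ZtE R X E) 0 * ((3/2:ℝ) • Jv E) 1
      - ((2:ℝ) • ZtE R X E) 1 * ((3/2:ℝ) • Jv E) 0 ≠ 0 := by
    intro hc; exact hdQV (by linarith)
  simp only [MP, MQ, MV, Set.mem_insert_iff, Set.mem_singleton_iff] at hM₁ hM₂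
  rcases hM₁ with h1 | h1 | h1 <;> rcases hM₂ with h2 | h2 | h2 <;> subst h1 <;> subst h2
  · exact absurd rfl hMne
  · exact key Imax _ _ _ _ s₁ s₂ _ _ hdPQ Wstar hWstar.1 hWstar.2.1 hWstar.2.2 hmin
  · exact key Imax _ _ _ _ s₁ s₂ _ _ hdPV Wstar hWstar.1 hWstar.2.1 hWstar.2.2 hmin
  · exact key Imax _ _ _ _ s₁ s₂ _ _ hdQP Wstar hWstar.1 hWstar.2.1 hWstar.2.2 hmin
  · exact absurd rfl hMne
  · exact key Imax _ _ _ _ s₁ s₂ _ _ hdQV Wstar hWstar.1 hWstar.2.1 hWstar.2.2 hmin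
  · exact key Imax _ _ _ _ s₁ s₂ _ _ hdVP Wstar hWstar.1 hWstar.2.1 hWstar.2.2 hmin
  · exact key Imax _ _ _ _ s₁ s₂ _ _ hdVQ Wstar hWstar.1 hWstar.2.1 hWstar.2.2 hmin
  · exact absurd rfl hMne
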